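/- Let P be a standard k-ribbon Fibonacci tableau with entries 1, ..., n. Then ev(P) has the same k-ribbon Fibonacci shape as P, and the tilings of P and ev(P) are related as follows: in each column of height 1 the single k-ribbon of ev(P) has the same height as the single k-ribbon of P, and in each column of height 2 the heights of the two k-ribbons are swapped — if in P that column has a k-ribbon of height j on top of a k-ribbon of height k+1−j, then in ev(P) that column has a k-ribbon of height k+1−j on top of a k-ribbon of height j. -/

import Mathlib

namespace KRF

/-- A letter of the alphabet `{1_1, …, 1_k, 2}`:  `one j` stands for the letter `1_j`
(with `1 ≤ j ≤ k` for genuine letters), and `two` stands for the letter `2`. -/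
inductive Letter (k : ℕ) : Type where
  | one : ℕ → Letter k
  | two : Letter k
deriving DecidableEq

/-- A word over the alphabet `{1_1, …, 1_k, 2}`, listed from the leftmost letter to the
rightmost letter. -/
abbrev Word (k : ℕ) := List (Letter k)

/-- The contribution of a letter to the rank: each `1_j` counts `1` and each `2` counts `2`. -/
def Letter.rank {k : ℕ} : Letter k → ℕ
  | .one _ => 1
  | .two => 2

/-- The rank of a word: the sum of its letters. -/
def Word.rank {k : ℕ} (w : Word k) : ℕ := (w.map Letter.rank).sum

/-- The letter `1_j` is valid when `1 ≤ j ≤ k`. -/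
def Letter.Valid (k : ℕ) : Letter k → Prop
  | .one j => 1 ≤ j ∧ j ≤ k
  | .two => True

/-- A genuine word of the Fibonacci poset `Z(k)`: all of its letters are valid. -/
def Word.Valid (k : ℕ) (w : Word k) : Prop := ∀ l ∈ w, l.Valid k

/-- The cover relation of the Fibonacci poset `Z(k)`:  `z` is covered by `w` iff `z` is
obtained from `w` either by changing a `2` into some `1_j` when all letters to the left of
that `2` are `2`'s, or by deleting the leftmost letter of the form `1_j`. -/
def ZCovers (k : ℕ) (z w : Word k) : Prop :=
  (∃ (p s : Word k) (j : ℕ), (∀ l ∈ p, l = Letter.two) ∧ 1 ≤ j ∧ j ≤ k ∧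
      w = p ++ Letter.two :: s ∧ z = p ++ Letter.one j :: s) ∨
  (∃ (p s : Word k) (j : ℕ), (∀ l ∈ p, l = Letter.two) ∧ 1 ≤ j ∧ j ≤ k ∧
      w = p ++ Letter.one j :: s ∧ z = p ++ s)

/-- `c 0 ⋖ c 1 ⋖ ⋯ ⋖ c n` is a saturated chain in `Z(k)` starting at the empty word. -/
def IsZChain (k n : ℕ) (c : ℕ → Word k) : Prop :=
  c 0 = [] ∧ ∀ i, i < n → ZCovers k (c i) (c (i + 1))

end KRF
namespace KRF

/-- A column of a (tiled and filled) `k`-ribbon Fibonacci tableau.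
`single h v` is a column of height 1 (shape letter `1_h`) tiled by one `k`-ribbon of
height `h` filled with the value `v`.
`double ht hb vt vb` is a column of height 2 (shape letter `2`) tiled by a `k`-ribbon of
height `ht` filled with `vt` stacked on top of a `k`-ribbon of height `hb` (always
`hb = k + 1 - ht` for genuine tableaux) filled with `vb`. -/
inductive Col (k : ℕ) : Type where
  | single : ℕ → ℕ → Col k
  | double : ℕ → ℕ → ℕ → ℕ → Col k
deriving DecidableEq

/-- A (tiled, filled) `k`-ribbon Fibonacci tableau: its list of columns, from the leftmost
column to the rightmost one. -/
abbrev Tab (k : ℕ) := List (Col k)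

/-- The shape letter of a column. -/
def Col.shape {k : ℕ} : Col k → Letter k
  | .single h _ => Letter.one h
  | .double _ _ _ _ => Letter.two

/-- The `k`-ribbon Fibonacci shape (a word) underlying a tableau. -/
def Tab.shape {k : ℕ} (T : Tab k) : Word k := T.map Col.shape

/-- The value in the bottom `k`-ribbon of a column. -/
def Col.bottomVal {k : ℕ} : Col k → ℕ
  | .single _ v => v
  | .double _ _ _ vb => vb

/-- The heights occurring in a column are genuine ribbon heights: between `1` and `k`,
and in a column of height 2 the two heights sum to `k + 1`. -/
def Col.HeightsValid (k : ℕ) : Col k → Prop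
  | .single h _ => 1 ≤ h ∧ h ≤ k
  | .double ht hb _ _ => 1 ≤ ht ∧ ht ≤ k ∧ hb = k + 1 - ht

/-- The list of all entries of a tableau (one for each `k`-ribbon). -/
def Tab.entries {k : ℕ} (T : Tab k) : List ℕ :=
  (T.map fun c => match c with
    | Col.single _ v => [v]
    | Col.double _ _ vt vb => [vt, vb]).flatten

/-- The list of the bottom-ribbon values of the columns of a tableau. -/
def Tab.bottoms {k : ℕ} (T : Tab k) : List ℕ := T.map Col.bottomVal

/-- `T` is a standard `k`-ribbon Fibonacci tableau with entries `1, …, n`: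
heights are valid, the entries are exactly `1, …, n`,  and the tableau can be built by
placing `n, n-1, …, 1` in order, each new `k`-ribbon being either appended (as a new
rightmost height-1 column) to the shape formed by the `k`-ribbons containing larger
entries, or stacked on top of a single such `k`-ribbon.  Equivalently (and this is how we
formalize it): the bottom entries strictly decrease from left to right (in particular the
`k`-ribbon containing the leftmost square of the bottom row contains `n`), and in each
column of height 2 the top entry is smaller than the bottom entry. -/
def IsStandardTab (k n : ℕ) (T : Tab k) : Prop :=
  (∀ c ∈ T, Col.HeightsValid k c) ∧
  (Tab.entries T).Perm (List.range' 1 n) ∧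
  List.Chain' (fun a b => b < a) (Tab.bottoms T) ∧
  (∀ c ∈ T, ∀ ht hb vt vb, c = Col.double ht hb vt vb → vt < vb)

/-- Updating a (partial) path tableau along one cover step `z ⋖ w` of `Z(k)`, placing the
value `i` in the `k` new squares of `w` relative to `z`:  if `w` is obtained from `z` by
inserting a letter `1_j` after the prefix of `2`'s, a new height-1 column with a single
ribbon of height `j` filled with `i` is created there; if `w` is obtained from `z` by
changing the letter `1_h` just after the prefix of `2`'s into a `2`, the `k` new squares
of that column form a `k`-ribbon of height `k + 1 - h` filled with `i`, stacked on top of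
the already present `k`-ribbon of height `h`. -/
def updateTab (k : ℕ) (i : ℕ) : Word k → Word k → Tab k → Tab k
  | Letter.two :: z', Letter.two :: w', c :: T => c :: updateTab k i z' w' T
  | Letter.one h :: _, Letter.two :: _, Col.single _ v :: T =>
      Col.double (k + 1 - h) h i v :: T
  | z, Letter.one j :: w', T => if z = w' then Col.single j i :: T else T
  | _, _, T => T

/-- The `k`-ribbon Fibonacci path tableau determined by a saturated chain in `Z(k)`:
for each `i = 1, …, n` the value `i` is placed in the `k` new squares of `c i` relative
to `c (i-1)`. -/
def chainTab (k : ℕ) (c : ℕ → Word k) : ℕ → Tab k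
  | 0 => []
  | m + 1 => updateTab k (m + 1) (c m) (c (m + 1)) (chainTab k c m)

/-- `T` is a `k`-ribbon Fibonacci path tableau with entries `1, …, n`: it is obtained
from some saturated chain `∅ = c 0 ⋖ c 1 ⋖ ⋯ ⋖ c n` in `Z(k)` by placing `i`'s in the
`k` new squares created at the `i`-th step. -/
def IsPathTab (k n : ℕ) (T : Tab k) : Prop :=
  ∃ c : ℕ → Word k, IsZChain k n c ∧ T = chainTab k c n

end KRF
namespace KRF

/-- The bubbling phase of one evacuation step.  The current column has an empty bottom
`k`-ribbon, below a `k`-ribbon of height `ht` filled with `a` (`hb` is the height of the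
empty ribbon); `rest` is the list of columns strictly to its right.  As long as there is a
ribbon above the empty one, `a` is compared with the entry `b` of the bottom ribbon of the
next column: if `a > b` the ribbon containing `a` drops to the bottom (keeping its height)
and the empty ribbon moves to the top of the column, where it is removed; if `a < b` the
empty ribbon is filled with `b` and the empty ribbon moves to the next column.  The result
is the position (index relative to the current column, height, whether it was a top
ribbon) of the finally removed empty `k`-ribbon, together with the updated suffix of the
tableau (with the empty ribbon removed and the columns slid left). -/
def evacLoop {k : ℕ} (ht hb a : ℕ) : Tab k → (ℕ × ℕ × Bool) × Tab k
  | [] => ((0, hb, true), [Col.single ht a])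
  | c :: rest =>
    if Col.bottomVal c < a then ((0, hb, true), Col.single ht a :: c :: rest)
    else
      match c with
      | Col.single h2 v => ((1, h2, false), Col.double ht hb a v :: rest)
      | Col.double ht' hb' vt' vb' =>
          let r := evacLoop ht' hb' vt' rest
          ((r.1.1 + 1, r.1.2.1, r.1.2.2), Col.double ht hb a vb' :: r.2)

/-- One evacuation step: erase the entry of the bottom `k`-ribbon of the leftmost column
(the largest entry) and bubble the empty ribbon until it can be removed.  Returns the
position (column index, height, whether it is a top ribbon) of the removed empty
`k`-ribbon together with the remaining (slid) tableau. -/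
def evacStep (k : ℕ) : Tab k → (ℕ × ℕ × Bool) × Tab k
  | [] => ((0, 0, false), [])
  | Col.single h _ :: rest => ((0, h, false), rest)
  | Col.double ht hb vt _ :: rest => evacLoop ht hb vt rest

/-- Place the value `v` in a `k`-ribbon of height `h` at the column with index `idx`:
if `isTop = false` a new height-1 column is inserted at index `idx`; if `isTop = true`
the ribbon is put on top of the (single) ribbon of the column at index `idx`. -/
def placeAt {k : ℕ} : ℕ → ℕ → Bool → ℕ → Tab k → Tab k
  | 0, h, false, v, T => Col.single h v :: T
  | 0, h, true, v, Col.single h0 vb :: rest => Col.double h h0 v vb :: rest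
  | 0, _, true, _, T => T
  | idx + 1, h, tp, v, c :: rest => c :: placeAt idx h tp v rest
  | _ + 1, _, _, _, [] => []

/-- The number of `k`-ribbons of a tableau. -/
def Tab.ribbonCount {k : ℕ} (T : Tab k) : ℕ :=
  (T.map fun c => match c with
    | Col.single _ _ => 1
    | Col.double _ _ _ _ => 2).sum

/-- The evacuation recursion: each step removes the largest remaining entry, bubbles the
empty ribbon to its final position, and records that entry at that position in the
evacuation tableau (which has the same shape as the original tableau).  Each step removes
exactly one `k`-ribbon, so `Tab.ribbonCount T` steps suffice. -/
def evacAux (k : ℕ) : ℕ → Tab k → Tab k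
  | 0, _ => []
  | _ + 1, [] => []
  | fuel + 1, c :: rest =>
      let s := evacStep k (c :: rest)
      placeAt s.1.1 s.1.2.1 s.1.2.2 (Col.bottomVal c) (evacAux k fuel s.2)

/-- The evacuation `ev(P)` of a (standard) `k`-ribbon Fibonacci tableau. -/
def evac (k : ℕ) (T : Tab k) : Tab k := evacAux k (Tab.ribbonCount T) T

end KRF
namespace KRF

/-! ### Auxiliary development for the proof of Statement 18 -/

/-- The "skeleton" of a column: its tiling data (heights), forgetting the values. -/
def colSkel {k : ℕ} : Col k → ℕ ⊕ (ℕ × ℕ)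
  | .single h _ => .inl h
  | .double ht hb _ _ => .inr (ht, hb)

/-- The height-swapped skeleton of a column. -/
def colSwap {k : ℕ} : Col k → ℕ ⊕ (ℕ × ℕ)
  | .single h _ => .inl h
  | .double ht hb _ _ => .inr (hb, ht)

def skel {k : ℕ} (T : Tab k) : List (ℕ ⊕ (ℕ × ℕ)) := T.map colSkel

def swapSkel {k : ℕ} (T : Tab k) : List (ℕ ⊕ (ℕ × ℕ)) := T.map colSwap

def colEntries {k : ℕ} : Col k → List ℕ
  | .single _ v => [v]
  | .double _ _ vt vb => [vt, vb]

lemma entries_cons {k : ℕ} (c : Col k) (T : Tab k) :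
    Tab.entries (c :: T) = colEntries c ++ Tab.entries T := by
  cases c <;> simp [Tab.entries, colEntries]

lemma bottom_mem_colEntries {k : ℕ} (c : Col k) : Col.bottomVal c ∈ colEntries c := by
  cases c <;> simp [Col.bottomVal, colEntries]

lemma bottoms_subset_entries {k : ℕ} (T : Tab k) :
    ∀ b ∈ Tab.bottoms T, b ∈ Tab.entries T := by
  induction T with
  | nil => simp [Tab.bottoms, Tab.entries]
  | cons c T ih =>
    intro b hb
    rw [entries_cons]
    rcases List.mem_cons.mp hb with h | h
    · exact List.mem_append.mpr (Or.inl (h ▸ bottom_mem_colEntries c))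
    · exact List.mem_append.mpr (Or.inr (ih b h))

/-- The invariant preserved along the evacuation recursion. -/
def Good (k : ℕ) (T : Tab k) : Prop :=
  (∀ c ∈ T, Col.HeightsValid k c) ∧
  List.Pairwise (fun a b => b < a) (Tab.bottoms T) ∧
  (∀ c ∈ T, ∀ ht hb vt vb, c = Col.double ht hb vt vb → vt < vb) ∧
  (Tab.entries T).Nodup

lemma good_cons {k : ℕ} {c : Col k} {T : Tab k} (h : Good k (c :: T)) : Good k T := by
  obtain ⟨h1, h2, h3, h4⟩ := h
  refine ⟨fun x hx => h1 x (List.mem_cons_of_mem c hx),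
    (List.pairwise_cons.mp h2).2,
    fun x hx => h3 x (List.mem_cons_of_mem c hx), ?_⟩
  rw [entries_cons] at h4
  exact (List.Nodup.of_append_right h4)

lemma entry_le_bottom {k : ℕ} {c : Col k}
    (h3 : ∀ ht hb vt vb, c = Col.double ht hb vt vb → vt < vb) :
    ∀ e ∈ colEntries c, e ≤ Col.bottomVal c := by
  cases c with
  | single h v => simp [colEntries, Col.bottomVal]
  | double ht hb vt vb =>
    intro e he
    rcases (by simpa [colEntries] using he) with rfl | rfl
    · exact le_of_lt (h3 ht hb e vb rfl)
    · simp [Col.bottomVal]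

lemma entries_lt_bottom {k : ℕ} {c : Col k} {T : Tab k} (h : Good k (c :: T)) :
    ∀ e ∈ Tab.entries T, e < Col.bottomVal c := by
  induction T generalizing c with
  | nil => simp [Tab.entries]
  | cons c' T ih =>
    intro e he
    rw [entries_cons] at he
    have hpair := h.2.1
    have hlt : Col.bottomVal c' < Col.bottomVal c := by
      have := (List.pairwise_cons.mp hpair).1
      exact this (Col.bottomVal c') (by simp [Tab.bottoms])
    rcases List.mem_append.mp he with h' | h'
    · have := entry_le_bottom (fun ht hb vt vb hc =>
        h.2.2.1 c' (List.mem_cons_of_mem c (List.mem_cons_self)) ht hb vt vb hc) e h'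
      omega
    · have := ih (good_cons h) e h'
      omega

lemma rc_cons_single {k : ℕ} (h v : ℕ) (T : Tab k) :
    Tab.ribbonCount (Col.single h v :: T) = Tab.ribbonCount T + 1 := by
  simp [Tab.ribbonCount]; omega

lemma rc_cons_double {k : ℕ} (ht hb vt vb : ℕ) (T : Tab k) :
    Tab.ribbonCount (Col.double ht hb vt vb :: T) = Tab.ribbonCount T + 2 := by
  simp [Tab.ribbonCount]; omega

lemma skel_eq_inl_cons {k : ℕ} {U : Tab k} {h : ℕ} {S : List (ℕ ⊕ (ℕ × ℕ))}
    (hU : skel U = Sum.inl h :: S) :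
    ∃ v U', U = Col.single h v :: U' ∧ skel U' = S := by
  cases U with
  | nil => simp [skel] at hU
  | cons c U' =>
    rw [skel, List.map_cons] at hU
    obtain ⟨h1, h2⟩ := List.cons_eq_cons.mp hU
    cases c with
    | single h' v =>
      simp only [colSkel, Sum.inl.injEq] at h1
      exact ⟨v, U', by rw [h1], h2⟩
    | double ht hb vt vb => simp [colSkel] at h1

lemma skel_eq_inr_cons {k : ℕ} {U : Tab k} {p q : ℕ} {S : List (ℕ ⊕ (ℕ × ℕ))}
    (hU : skel U = Sum.inr (p, q) :: S) :
    ∃ vt vb U', U = Col.double p q vt vb :: U' ∧ skel U' = S := by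
  cases U with
  | nil => simp [skel] at hU
  | cons c U' =>
    rw [skel, List.map_cons] at hU
    obtain ⟨h1, h2⟩ := List.cons_eq_cons.mp hU
    cases c with
    | single h' v => simp [colSkel] at h1
    | double ht hb vt vb =>
      simp only [colSkel, Sum.inr.injEq, Prod.mk.injEq] at h1
      exact ⟨vt, vb, U', by rw [h1.1, h1.2], h2⟩

-- unfolding lemmas
variable {k : ℕ}

lemma evacLoop_nil (ht hb a : ℕ) :
    evacLoop (k := k) ht hb a [] = ((0, hb, true), [Col.single ht a]) := rfl

lemma evacLoop_cons_lt {c : Col k} {a : ℕ} (h : Col.bottomVal c < a) (ht hb : ℕ) (rest : Tab k) :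
    evacLoop ht hb a (c :: rest) = ((0, hb, true), Col.single ht a :: c :: rest) := by
  simp [evacLoop, h]

lemma evacLoop_cons_single {v a : ℕ} (h : ¬ v < a) (ht hb h2 : ℕ) (rest : Tab k) :
    evacLoop ht hb a (Col.single h2 v :: rest)
      = ((1, h2, false), Col.double ht hb a v :: rest) := by
  simp [evacLoop, Col.bottomVal, h]

lemma evacLoop_cons_double {vb' a : ℕ} (h : ¬ vb' < a) (ht hb ht' hb' vt' : ℕ) (rest : Tab k) :
    evacLoop ht hb a (Col.double ht' hb' vt' vb' :: rest)
      = (((evacLoop ht' hb' vt' rest).1.1 + 1, (evacLoop ht' hb' vt' rest).1.2.1,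
          (evacLoop ht' hb' vt' rest).1.2.2),
         Col.double ht hb a vb' :: (evacLoop (k := k) ht' hb' vt' rest).2) := by
  simp [evacLoop, Col.bottomVal, h]

lemma placeAt_zero_false (h v : ℕ) (T : Tab k) :
    placeAt 0 h false v T = Col.single h v :: T := rfl

lemma placeAt_zero_true (h v h0 vb : ℕ) (rest : Tab k) :
    placeAt 0 h true v (Col.single h0 vb :: rest) = Col.double h h0 v vb :: rest := rfl

lemma placeAt_succ (idx h : ℕ) (tp : Bool) (v : ℕ) (c : Col k) (rest : Tab k) :
    placeAt (idx + 1) h tp v (c :: rest) = c :: placeAt idx h tp v rest := rfl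

lemma evacAux_succ_single (m h v : ℕ) (rest : Tab k) :
    evacAux k (m + 1) (Col.single h v :: rest) = Col.single h v :: evacAux k m rest := rfl

lemma evacAux_succ_double (m ht hb vt vb : ℕ) (rest : Tab k) :
    evacAux k (m + 1) (Col.double ht hb vt vb :: rest)
      = placeAt (evacLoop ht hb vt rest).1.1 (evacLoop ht hb vt rest).1.2.1
          (evacLoop ht hb vt rest).1.2.2 vb (evacAux k m (evacLoop ht hb vt rest).2) := rfl

lemma bottoms_cons (c : Col k) (T : Tab k) :
    Tab.bottoms (c :: T) = Col.bottomVal c :: Tab.bottoms T := rfl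

/-- The key properties of the bubbling phase `evacLoop`. -/
lemma evacLoop_spec (k : ℕ) :
    ∀ (rest : Tab k) (ht hb a : ℕ), 1 ≤ ht → ht ≤ k → hb = k + 1 - ht →
    Good k rest → a ∉ Tab.entries rest →
    Tab.ribbonCount (evacLoop ht hb a rest).2 = Tab.ribbonCount rest + 1 ∧
    (Tab.entries (evacLoop ht hb a rest).2).Perm (a :: Tab.entries rest) ∧
    Good k (evacLoop ht hb a rest).2 ∧
    (∀ (w : ℕ) (U : Tab k), skel U = swapSkel (evacLoop ht hb a rest).2 →
      skel (placeAt (evacLoop ht hb a rest).1.1 (evacLoop ht hb a rest).1.2.1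
        (evacLoop ht hb a rest).1.2.2 w U) = Sum.inr (hb, ht) :: swapSkel rest) := by
  intro rest
  induction rest with
  | nil =>
    intro ht hb a h1 h2 hhb hG ha
    rw [evacLoop_nil]
    refine ⟨by simp [Tab.ribbonCount], by simp [Tab.entries], ?_, ?_⟩
    · refine ⟨?_, by simp [Tab.bottoms], ?_, by simp [Tab.entries]⟩
      · intro c hc
        rcases List.mem_singleton.mp hc with rfl
        exact ⟨h1, h2⟩
      · intro c hc ht' hb' vt' vb' hc'
        rcases List.mem_singleton.mp hc with rfl
        simp at hc'
    · intro w U hU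
      simp only [swapSkel, List.map_cons, List.map_nil, colSwap] at hU
      obtain ⟨x, U', rfl, hU'⟩ := skel_eq_inl_cons hU
      have hU'nil : U' = [] := by
        cases U' with
        | nil => rfl
        | cons _ _ => simp [skel] at hU'
      subst hU'nil
      simp [placeAt, skel, colSkel, swapSkel]
  | cons c rest ih =>
    intro ht hb a h1 h2 hhb hG ha
    have hGr : Good k rest := good_cons hG
    have haNe : a ≠ Col.bottomVal c := by
      intro h
      exact ha (h ▸ (bottoms_subset_entries (c :: rest) _ (by simp [Tab.bottoms])))
    have hbrest : ∀ b ∈ Tab.bottoms rest, b < Col.bottomVal c := by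
      have := hG.2.1
      rw [bottoms_cons] at this
      exact fun b hb' => (List.pairwise_cons.mp this).1 b hb'
    by_cases hlt : Col.bottomVal c < a
    · rw [evacLoop_cons_lt hlt]
      refine ⟨by simp [Tab.ribbonCount]; omega, by simp [entries_cons, colEntries], ?_, ?_⟩
      · refine ⟨?_, ?_, ?_, ?_⟩
        · intro x hx
          rcases List.mem_cons.mp hx with rfl | hx
          · exact ⟨h1, h2⟩
          · exact hG.1 x hx
        · rw [bottoms_cons]
          refine List.pairwise_cons.mpr ⟨?_, hG.2.1⟩
          intro b hb'
          rw [bottoms_cons] at hb'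
          show b < a
          rcases List.mem_cons.mp hb' with rfl | hb''
          · exact hlt
          · exact lt_trans (hbrest b hb'') hlt
        · intro x hx ht' hb' vt' vb' hx'
          rcases List.mem_cons.mp hx with rfl | hx
          · simp at hx'
          · exact hG.2.2.1 x hx ht' hb' vt' vb' hx'
        · rw [entries_cons]
          simp only [colEntries, List.singleton_append, List.nodup_cons]
          exact ⟨ha, hG.2.2.2⟩
      · intro w U hU
        simp only [swapSkel, List.map_cons, colSwap] at hU
        obtain ⟨x, U', rfl, hU'⟩ := skel_eq_inl_cons hU
        rw [placeAt_zero_true]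
        simp only [skel, swapSkel, List.map_cons, colSkel]
        rw [show (List.map colSkel U' : List (ℕ ⊕ (ℕ × ℕ))) = skel U' from rfl, hU']
        rfl
    · cases c with
      | single h2' v =>
        have hav : a < v := by
          simp only [Col.bottomVal] at hlt haNe
          omega
        rw [evacLoop_cons_single (by omega : ¬ v < a)]
        have hventr : Tab.entries (Col.single h2' v :: rest) = v :: Tab.entries rest := by
          simp [entries_cons, colEntries]
        refine ⟨by simp [Tab.ribbonCount]; omega, by simp [entries_cons, colEntries], ?_, ?_⟩
        · refine ⟨?_, ?_, ?_, ?_⟩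
          · intro x hx
            rcases List.mem_cons.mp hx with rfl | hx
            · exact ⟨h1, h2, hhb⟩
            · exact hGr.1 x hx
          · rw [bottoms_cons]
            have := hG.2.1
            rw [bottoms_cons] at this
            exact this
          · intro x hx ht' hb' vt' vb' hx'
            rcases List.mem_cons.mp hx with rfl | hx
            · injection hx' with e1 e2 e3 e4
              subst e3; subst e4
              exact hav
            · exact hGr.2.2.1 x hx ht' hb' vt' vb' hx'
          · have hEq : Tab.entries (Col.double ht hb a v :: rest)
                = a :: Tab.entries (Col.single h2' v :: rest) := by
              simp [entries_cons, colEntries]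
            rw [hEq, List.nodup_cons]
            exact ⟨ha, hG.2.2.2⟩
        · intro w U hU
          simp only [swapSkel, List.map_cons, colSwap] at hU
          obtain ⟨xt, xb, U', rfl, hU'⟩ := skel_eq_inr_cons hU
          rw [placeAt_succ, placeAt_zero_false]
          simp only [skel, swapSkel, List.map_cons, colSkel, colSwap]
          rw [show (List.map colSkel U' : List (ℕ ⊕ (ℕ × ℕ))) = skel U' from rfl, hU']
      | double ht' hb' vt' vb' =>
        have hc' := hG.1 _ List.mem_cons_self
        obtain ⟨h1', h2', hhb'⟩ := hc'
        have hvt : vt' < vb' := hG.2.2.1 _ List.mem_cons_self ht' hb' vt' vb' rfl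
        have hent : Tab.entries (Col.double ht' hb' vt' vb' :: rest)
            = vt' :: vb' :: Tab.entries rest := by simp [entries_cons, colEntries]
        have hnd := hG.2.2.2
        rw [hent, List.nodup_cons, List.mem_cons, not_or] at hnd
        have hvt'notin : vt' ∉ Tab.entries rest := hnd.1.2
        obtain ⟨IH1, IH2, IH3, IH4⟩ := ih ht' hb' vt' h1' h2' hhb' hGr hvt'notin
        have hav : a < vb' := by
          simp only [Col.bottomVal] at hlt haNe
          omega
        rw [evacLoop_cons_double (by omega : ¬ vb' < a)]
        have hperm : (Tab.entries (Col.double ht hb a vb' :: (evacLoop ht' hb' vt' rest).2)).Perm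
            (a :: Tab.entries (Col.double ht' hb' vt' vb' :: rest)) := by
          rw [entries_cons, hent]
          simp only [colEntries, List.cons_append, List.nil_append]
          exact ((IH2.cons vb').cons a).trans ((List.Perm.swap vt' vb' _).cons a)
        have hbigger : ∀ b ∈ Tab.bottoms (evacLoop ht' hb' vt' rest).2, b < vb' := by
          intro b hb'mem
          have hbent := bottoms_subset_entries _ b hb'mem
          have := IH2.mem_iff.mp hbent
          rcases List.mem_cons.mp this with rfl | hmem
          · exact hvt
          · have := entries_lt_bottom hG b hmem
            simpa [Col.bottomVal] using this
        refine ⟨?_, hperm, ?_, ?_⟩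
        · rw [rc_cons_double, rc_cons_double, IH1]
        · refine ⟨?_, ?_, ?_, ?_⟩
          · intro x hx
            rcases List.mem_cons.mp hx with rfl | hx
            · exact ⟨h1, h2, hhb⟩
            · exact IH3.1 x hx
          · rw [bottoms_cons]
            exact List.pairwise_cons.mpr ⟨fun b hb' => by
              simpa [Col.bottomVal] using hbigger b hb', IH3.2.1⟩
          · intro x hx htx hbx vtx vbx hx'
            rcases List.mem_cons.mp hx with rfl | hx
            · injection hx' with e1 e2 e3 e4
              subst e3; subst e4
              exact hav
            · exact IH3.2.2.1 x hx htx hbx vtx vbx hx'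
          · refine hperm.symm.nodup ?_
            rw [List.nodup_cons]
            exact ⟨ha, hG.2.2.2⟩
        · intro w U hU
          simp only [swapSkel, List.map_cons, colSwap] at hU
          obtain ⟨xt, xb, U', rfl, hU'⟩ := skel_eq_inr_cons hU
          rw [placeAt_succ]
          have hrec := IH4 w U' (by rw [hU']; rfl)
          simp only [skel, swapSkel, List.map_cons, colSkel, colSwap]
          rw [show (List.map colSkel (placeAt (evacLoop ht' hb' vt' rest).1.1
              (evacLoop ht' hb' vt' rest).1.2.1 (evacLoop ht' hb' vt' rest).1.2.2 w U')
              : List (ℕ ⊕ (ℕ × ℕ))) = skel _ from rfl, hrec]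
          rfl

/-- Main induction: evacuation swaps the heights in every double column. -/
lemma evacAux_skel (k : ℕ) :
    ∀ (m : ℕ) (T : Tab k), Tab.ribbonCount T ≤ m → Good k T →
    skel (evacAux k (Tab.ribbonCount T) T) = swapSkel T := by
  intro m
  induction m with
  | zero =>
    intro T hle hG
    cases T with
    | nil => simp [Tab.ribbonCount, evacAux, skel, swapSkel]
    | cons c rest => cases c <;> simp [Tab.ribbonCount] at hle
  | succ m ih =>
    intro T hle hG
    cases T with
    | nil => simp [Tab.ribbonCount, evacAux, skel, swapSkel]
    | cons c rest =>
      cases c with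
      | single h v =>
        rw [rc_cons_single] at hle ⊢
        rw [evacAux_succ_single]
        have hrec := ih rest (by omega) (good_cons hG)
        simp only [skel, swapSkel, List.map_cons, colSkel, colSwap]
        rw [show (List.map colSkel (evacAux k (Tab.ribbonCount rest) rest)
            : List (ℕ ⊕ (ℕ × ℕ))) = skel _ from rfl, hrec]
        rfl
      | double ht hb vt vb =>
        obtain ⟨h1', h2', hhb'⟩ := hG.1 _ List.mem_cons_self
        have hGr : Good k rest := good_cons hG
        have hnd := hG.2.2.2
        rw [show Tab.entries (Col.double ht hb vt vb :: rest)
            = vt :: vb :: Tab.entries rest from by simp [entries_cons, colEntries],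
          List.nodup_cons, List.mem_cons, not_or] at hnd
        have hvtnotin : vt ∉ Tab.entries rest := hnd.1.2
        obtain ⟨L1, L2, L3, L4⟩ := evacLoop_spec k rest ht hb vt h1' h2' hhb' hGr hvtnotin
        rw [rc_cons_double] at hle ⊢
        rw [evacAux_succ_double, ← L1]
        have hrec := ih (evacLoop ht hb vt rest).2 (by omega) L3
        rw [L4 vb _ hrec]
        rfl

lemma good_of_standard {k n : ℕ} {T : Tab k} (hT : IsStandardTab k n T) : Good k T := by
  obtain ⟨h1, h2, h3, h4⟩ := hT
  refine ⟨h1, ?_, h4, ?_⟩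
  · exact List.isChain_iff_pairwise.mp h3
  · exact h2.symm.nodup (List.nodup_range' (s := 1) (n := n))

lemma skel_map_shape {k : ℕ} (U : Tab k) :
    (skel U).map (Sum.elim Letter.one fun _ => Letter.two) = Tab.shape U := by
  induction U with
  | nil => simp [skel, Tab.shape]
  | cons c U ih => cases c <;> simp [skel, Tab.shape, colSkel, Col.shape] at ih ⊢ <;> exact ih

lemma swapSkel_map_shape {k : ℕ} (U : Tab k) :
    (swapSkel U).map (Sum.elim Letter.one fun _ => Letter.two) = Tab.shape U := by
  induction U with
  | nil => simp [swapSkel, Tab.shape]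
  | cons c U ih => cases c <;> simp [swapSkel, Tab.shape, colSwap, Col.shape] at ih ⊢ <;> exact ih


/-- Let `P` be a standard `k`-ribbon Fibonacci tableau with entries
`1, …, n`.  Then `ev(P)` has the same `k`-ribbon Fibonacci shape as `P`, and the tilings
of `P` and `ev(P)` are related as follows: in each column of height 1 the single
`k`-ribbon of `ev(P)` has the same height as the single `k`-ribbon of `P`, and in each
column of height 2 the heights of the two `k`-ribbons are swapped — if in `P` the column
has a `k`-ribbon of height `j` on top of a `k`-ribbon of height `k + 1 − j`, then in
`ev(P)` it has a `k`-ribbon of height `k + 1 − j` on top of a `k`-ribbon of height `j`. -/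
theorem evac_shape_and_tiling (k n : ℕ) (hk : 1 ≤ k) (T : Tab k)
    (hT : IsStandardTab k n T) :
    Tab.shape (evac k T) = Tab.shape T ∧
    (evac k T).length = T.length ∧
    (∀ (i : ℕ) (h v : ℕ), T[i]? = some (Col.single h v) →
      ∃ v', (evac k T)[i]? = some (Col.single h v')) ∧
    (∀ (i : ℕ) (ht hb vt vb : ℕ), T[i]? = some (Col.double ht hb vt vb) →
      ∃ vt' vb', (evac k T)[i]? = some (Col.double hb ht vt' vb')) := by
  have hG : Good k T := good_of_standard hT
  have hsk : skel (evac k T) = swapSkel T :=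
    evacAux_skel k (Tab.ribbonCount T) T le_rfl hG
  refine ⟨?_, ?_, ?_, ?_⟩
  · rw [← skel_map_shape (evac k T), hsk, swapSkel_map_shape]
  · have := congrArg List.length hsk
    simpa [skel, swapSkel] using this
  · intro i h v hi
    have h2 : (evac k T)[i]?.map colSkel = some (Sum.inl h) := by
      rw [show ((evac k T)[i]?.map colSkel : Option (ℕ ⊕ (ℕ × ℕ)))
          = (skel (evac k T))[i]? from List.getElem?_map.symm, hsk]
      simp [swapSkel, List.getElem?_map, hi, colSwap]
    obtain ⟨c, hc, hc2⟩ := Option.map_eq_some_iff.mp h2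
    cases c with
    | single h' v' =>
      simp only [colSkel, Sum.inl.injEq] at hc2
      exact ⟨v', by rw [hc, hc2]⟩
    | double ht hb vt vb => simp [colSkel] at hc2
  · intro i ht hb vt vb hi
    have h2 : (evac k T)[i]?.map colSkel = some (Sum.inr (hb, ht)) := by
      rw [show ((evac k T)[i]?.map colSkel : Option (ℕ ⊕ (ℕ × ℕ)))
          = (skel (evac k T))[i]? from List.getElem?_map.symm, hsk]
      simp [swapSkel, List.getElem?_map, hi, colSwap]
    obtain ⟨c, hc, hc2⟩ := Option.map_eq_some_iff.mp h2
    cases c with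
    | single h' v' => simp [colSkel] at hc2
    | double ht' hb' vt' vb' =>
      simp only [colSkel, Sum.inr.injEq, Prod.mk.injEq] at hc2
      exact ⟨vt', vb', by rw [hc, hc2.1, hc2.2]⟩

end KRF
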